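/- Let α ∈ (0, π/2), Δ = Δ(α) and let {T_t}_{t∈Δ} be a C₀-semigroup on a Banach space X. If x₀ ∈ X is a distributionally semi-irregular vector, then for every t₀ ∈ Δ the vector T_{t₀} x₀ is also distributionally semi-irregular; that is, the set of distributionally semi-irregular vectors is invariant under every operator of the semigroup. -/

import Mathlib

open MeasureTheory Filter Set

noncomputable section

/-- The complex sector `Δ(α) = {r e^{iθ} : r ≥ 0, |θ| ≤ α}`. -/
def sector (α : ℝ) : Set ℂ := {z : ℂ | |Complex.arg z| ≤ α}

/-- `Δ_r = {t ∈ Δ(α) : |t| < r}`. -/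
def sectorBall (α r : ℝ) : Set ℂ := {z ∈ sector α | ‖z‖ < r}

/-- Upper density of a set `A` with respect to the sector `Δ(α)`. -/
def udens (α : ℝ) (A : Set ℂ) : ℝ :=
  limsup (fun r : ℝ =>
    (volume (A ∩ sectorBall α r)).toReal / (volume (sectorBall α r)).toReal) atTop

/-- Lower density of a set `A` with respect to the sector `Δ(α)`. -/
def ldens (α : ℝ) (A : Set ℂ) : ℝ :=
  liminf (fun r : ℝ =>
    (volume (A ∩ sectorBall α r)).toReal / (volume (sectorBall α r)).toReal) atTop

/-- The filter expressing `|t| → ∞` along `t ∈ A`. -/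
def alongAbs (A : Set ℂ) : Filter ℂ :=
  (atTop.comap (fun z : ℂ => ‖z‖)) ⊓ 𝓟 A

/-- A `C₀`-semigroup of continuous linear operators indexed by the sector `Δ(α)`. -/
structure CZeroSemigroup (α : ℝ) (𝕜 X : Type*) [NontriviallyNormedField 𝕜]
    [NormedAddCommGroup X] [NormedSpace 𝕜 X] where
  T : ℂ → X →L[𝕜] X
  map_zero' : T 0 = ContinuousLinearMap.id 𝕜 X
  map_add' : ∀ s ∈ sector α, ∀ t ∈ sector α, T (s + t) = (T s).comp (T t)
  cont' : ∀ x : X, ContinuousOn (fun t => T t x) (sector α)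

variable {α : ℝ} {𝕜 X : Type*} [NontriviallyNormedField 𝕜]
  [NormedAddCommGroup X] [NormedSpace 𝕜 X]

/-- Distributional sensitivity. -/
def DistSensitive (S : CZeroSemigroup α 𝕜 X) : Prop :=
  ∃ δ > (0:ℝ), ∀ x : X, ∀ ε > (0:ℝ), ∃ y : X, ‖x - y‖ < ε ∧
    udens α {t ∈ sector α | δ < ‖S.T t x - S.T t y‖} = 1

/-- Distributionally unbounded vector. -/
def DistUnbounded (S : CZeroSemigroup α 𝕜 X) (x : X) : Prop :=
  ∃ A : Set ℂ, A ⊆ sector α ∧ MeasurableSet A ∧ udens α A = 1 ∧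
    Tendsto (fun t => ‖S.T t x‖) (alongAbs A) atTop

/-- Distributionally semi-irregular vector. -/
def DistSemiIrregular (S : CZeroSemigroup α 𝕜 X) (x : X) : Prop :=
  ∃ A B : Set ℂ, A ⊆ sector α ∧ B ⊆ sector α ∧ MeasurableSet A ∧ MeasurableSet B ∧
    udens α A = 1 ∧ udens α B = 1 ∧
    Tendsto (fun t => ‖S.T t x‖) (alongAbs A) (nhds 0) ∧
    ∃ δ > (0:ℝ), ∀ t ∈ B, δ ≤ ‖S.T t x‖

/-- Distributionally irregular vector. -/
def DistIrregular (S : CZeroSemigroup α 𝕜 X) (x : X) : Prop :=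
  ∃ A B : Set ℂ, A ⊆ sector α ∧ B ⊆ sector α ∧ MeasurableSet A ∧ MeasurableSet B ∧
    udens α A = 1 ∧ udens α B = 1 ∧
    Tendsto (fun t => ‖S.T t x‖) (alongAbs A) (nhds 0) ∧
    Tendsto (fun t => ‖S.T t x‖) (alongAbs B) atTop

/-- Distributionally chaotic pair. -/
def DistChaoticPair (S : CZeroSemigroup α 𝕜 X) (x y : X) : Prop :=
  ∃ δ > (0:ℝ), ∀ ε > (0:ℝ),
    udens α {t ∈ sector α | ‖S.T t x - S.T t y‖ < ε} = 1 ∧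
    udens α {t ∈ sector α | δ < ‖S.T t x - S.T t y‖} = 1

/-- Distributionally scrambled set. -/
def DistScrambled (S : CZeroSemigroup α 𝕜 X) (K : Set X) : Prop :=
  ∀ x ∈ K, ∀ y ∈ K, x ≠ y → DistChaoticPair S x y

section Aux
open Complex Pointwise

lemma measurableSet_sector (α : ℝ) : MeasurableSet (sector α) :=
  measurableSet_le Complex.measurable_arg.abs measurable_const

lemma measurableSet_sectorBall (α r : ℝ) : MeasurableSet (sectorBall α r) :=
  (measurableSet_sector α).inter
    (measurableSet_lt continuous_norm.measurable measurable_const)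

lemma sectorBall_subset_ball (α r : ℝ) : sectorBall α r ⊆ Metric.ball 0 r := by
  intro z hz
  simpa [Metric.mem_ball, Complex.dist_eq] using hz.2

lemma vol_sectorBall_ne_top (α r : ℝ) : volume (sectorBall α r) ≠ ⊤ :=
  ((measure_mono (sectorBall_subset_ball α r)).trans_lt measure_ball_lt_top).ne

lemma sectorBall_smul (α : ℝ) {r : ℝ} (hr : 0 < r) : sectorBall α r = r • sectorBall α 1 := by
  ext z
  rw [Set.mem_smul_set_iff_inv_smul_mem₀ (ne_of_gt hr)]
  simp only [sectorBall, sector, Set.mem_setOf_eq, Complex.real_smul]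
  rw [Complex.arg_real_mul z (inv_pos.2 hr), norm_mul, Complex.norm_real, Real.norm_eq_abs,
    abs_of_pos (inv_pos.2 hr)]
  constructor
  · rintro ⟨h1, h2⟩
    refine ⟨h1, ?_⟩
    rw [inv_mul_lt_iff₀ hr, mul_one]
    exact h2
  · rintro ⟨h1, h2⟩
    refine ⟨h1, ?_⟩
    rw [inv_mul_lt_iff₀ hr, mul_one] at h2
    exact h2

lemma vol_sectorBall (α : ℝ) {r : ℝ} (hr : 0 < r) :
    volume (sectorBall α r) = ENNReal.ofReal (r ^ 2) * volume (sectorBall α 1) := by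
  rw [sectorBall_smul α hr, Measure.addHaar_smul, Complex.finrank_real_complex,
    _root_.abs_of_nonneg (pow_nonneg hr.le 2)]

lemma vol_sectorBall_one_pos {α : ℝ} (hα : 0 < α) : 0 < volume (sectorBall α 1) := by
  have harg : Complex.arg ((2:ℂ)⁻¹) = 0 := by
    have : ((2:ℂ)⁻¹) = ((2⁻¹ : ℝ) : ℂ) := by norm_num
    rw [this, Complex.arg_ofReal_of_nonneg (by norm_num)]
  have hca : ContinuousAt Complex.arg ((2:ℂ)⁻¹) := by
    apply Complex.continuousAt_arg
    rw [Complex.mem_slitPlane_iff]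
    left
    norm_num
  have h1 : ∀ᶠ z : ℂ in nhds ((2:ℂ)⁻¹), |Complex.arg z| ≤ α := by
    have : ∀ᶠ y : ℝ in nhds (Complex.arg ((2:ℂ)⁻¹)), |y| ≤ α := by
      rw [harg]
      have : Set.Ioo (-α) α ∈ nhds (0:ℝ) := Ioo_mem_nhds (by linarith) hα
      filter_upwards [this] with y hy
      rw [abs_le]
      exact ⟨hy.1.le, hy.2.le⟩
    exact hca.eventually this
  have h2 : ∀ᶠ z : ℂ in nhds ((2:ℂ)⁻¹), ‖z‖ < 1 := by
    have hc : ContinuousAt (fun z : ℂ => ‖z‖) ((2:ℂ)⁻¹) := continuous_norm.continuousAt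
    have : ‖(2:ℂ)⁻¹‖ < 1 := by
      rw [norm_inv, Complex.norm_two]
      norm_num
    exact hc.eventually_lt_const this
  have hmem : sectorBall α 1 ∈ nhds ((2:ℂ)⁻¹) := by
    filter_upwards [h1, h2] with z hz1 hz2
    exact ⟨hz1, hz2⟩
  exact Measure.measure_pos_of_mem_nhds _ hmem

end Aux
section Aux2
open Complex Pointwise

lemma sin_abs_arg (z : ℂ) : Real.sin |Complex.arg z| = |Real.sin (Complex.arg z)| := by
  rcases abs_cases (Complex.arg z) with ⟨h1, h2⟩ | ⟨h1, h2⟩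
  · rw [h1, _root_.abs_of_nonneg]
    exact Real.sin_nonneg_of_nonneg_of_le_pi h2 (Complex.arg_le_pi z)
  · rw [h1, Real.sin_neg, _root_.abs_of_nonpos]
    exact Real.sin_nonpos_of_nonpos_of_neg_pi_le h2.le (Complex.neg_pi_lt_arg z).le

lemma mem_sector_iff {α : ℝ} (hα : 0 < α) (hα' : α < Real.pi / 2) (z : ℂ) :
    z ∈ sector α ↔ |z.im| * Real.cos α ≤ z.re * Real.sin α := by
  have hpi := Real.pi_pos
  have hs : 0 < Real.sin α := Real.sin_pos_of_pos_of_lt_pi hα (by linarith)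
  have hc : 0 < Real.cos α := Real.cos_pos_of_mem_Ioo ⟨by linarith, hα'⟩
  by_cases hz : z = 0
  · simp [sector, hz, Complex.arg_zero, hα.le]
  have habs : 0 < ‖z‖ := by
    exact norm_pos_iff.2 hz
  have hre : ‖z‖ * Real.cos (Complex.arg z) = z.re := Complex.norm_mul_cos_arg z
  have him : ‖z‖ * Real.sin (Complex.arg z) = z.im := Complex.norm_mul_sin_arg z
  have him' : |z.im| = ‖z‖ * Real.sin |Complex.arg z| := by
    rw [sin_abs_arg, ← him, abs_mul, _root_.abs_of_nonneg habs.le]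
  have hre' : z.re = ‖z‖ * Real.cos |Complex.arg z| := by
    rw [Real.cos_abs, hre]
  rw [him', hre']
  constructor
  · intro h
    have h' : |Complex.arg z| ≤ α := h
    have hkey : Real.sin (|Complex.arg z| - α) ≤ 0 :=
      Real.sin_nonpos_of_nonpos_of_neg_pi_le (by linarith)
        (by nlinarith [abs_nonneg (Complex.arg z)])
    rw [Real.sin_sub] at hkey
    nlinarith
  · intro h
    have hkey : Real.sin (|Complex.arg z| - α) ≤ 0 := by
      rw [Real.sin_sub]
      nlinarith
    show |Complex.arg z| ≤ α
    by_contra hcon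
    push_neg at hcon
    have h1 : 0 < |Complex.arg z| - α := by linarith
    have h2 : |Complex.arg z| - α < Real.pi := by
      have := Complex.abs_arg_le_pi z
      linarith
    exact absurd hkey (not_le.2 (Real.sin_pos_of_pos_of_lt_pi h1 h2))

lemma sub_mem_sector {α : ℝ} (hα : 0 < α) (hα' : α < Real.pi / 2) {t z : ℂ}
    (hz : z ∈ sector α)
    (h1 : 2 * ‖t‖ ≤ z.re * Real.sin α - z.im * Real.cos α)
    (h2 : 2 * ‖t‖ ≤ z.re * Real.sin α + z.im * Real.cos α) :
    z - t ∈ sector α := by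
  have hpi := Real.pi_pos
  have hs : 0 < Real.sin α := Real.sin_pos_of_pos_of_lt_pi hα (by linarith)
  have hc : 0 < Real.cos α := Real.cos_pos_of_mem_Ioo ⟨by linarith, hα'⟩
  have hs1 : Real.sin α ≤ 1 := Real.sin_le_one α
  have hc1 : Real.cos α ≤ 1 := Real.cos_le_one α
  have htre : |t.re| ≤ ‖t‖ := Complex.abs_re_le_norm t
  have htim : |t.im| ≤ ‖t‖ := Complex.abs_im_le_norm t
  rw [mem_sector_iff hα hα']
  rw [Complex.sub_re, Complex.sub_im]
  rcases abs_cases (z.im - t.im) with ⟨he, _⟩ | ⟨he, _⟩ <;> rw [he] <;>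
    cases abs_cases t.re <;> cases abs_cases t.im <;> nlinarith

end Aux2
section Aux3
open Complex Pointwise

lemma strip_vol (u : Circle) (c s : ℝ) :
    volume {z : ℂ | |((u : ℂ) * z).im| ≤ c ∧ ‖z‖ < s} ≤
      ENNReal.ofReal (2 * s) * ENNReal.ofReal (2 * c) := by
  have hrect : MeasurableSet ((Set.Icc (-s) s) ×ˢ (Set.Icc (-c) c)) :=
    measurableSet_Icc.prod measurableSet_Icc
  have hsub : {z : ℂ | |((u : ℂ) * z).im| ≤ c ∧ ‖z‖ < s} ⊆
      (rotation u) ⁻¹' (Complex.measurableEquivRealProd ⁻¹'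
        ((Set.Icc (-s) s) ×ˢ (Set.Icc (-c) c))) := by
    rintro z ⟨h1, h2⟩
    have hre : |((u : ℂ) * z).re| ≤ s := by
      refine le_trans (Complex.abs_re_le_norm _) ?_
      rw [norm_mul, Circle.norm_coe, one_mul]
      exact h2.le
    simp only [Set.mem_preimage, rotation_apply, Complex.measurableEquivRealProd_apply,
      Set.mem_prod, Set.mem_Icc]
    rw [abs_le] at h1 hre
    exact ⟨⟨hre.1, hre.2⟩, ⟨h1.1, h1.2⟩⟩
  refine (measure_mono hsub).trans ?_
  rw [(rotation u).measurePreserving.measure_preimage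
      ((Complex.measurableEquivRealProd.measurable hrect).nullMeasurableSet),
    Complex.volume_preserving_equiv_real_prod.measure_preimage hrect.nullMeasurableSet,
    MeasureTheory.Measure.volume_eq_prod, MeasureTheory.Measure.prod_prod,
    Real.volume_Icc, Real.volume_Icc]
  apply le_of_eq
  congr 1 <;> [skip; skip] <;> congr 1 <;> ring

end Aux3
section Aux4
open Complex Pointwise

lemma exp_neg_mul_im (α : ℝ) (z : ℂ) :
    ((Circle.exp (-α) : ℂ) * z).im = z.im * Real.cos α - z.re * Real.sin α := by
  rw [Circle.coe_exp, Complex.mul_im, Complex.exp_ofReal_mul_I_re,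
    Complex.exp_ofReal_mul_I_im, Real.cos_neg, Real.sin_neg]
  ring

lemma exp_pos_mul_im (α : ℝ) (z : ℂ) :
    ((Circle.exp α : ℂ) * z).im = z.im * Real.cos α + z.re * Real.sin α := by
  rw [Circle.coe_exp, Complex.mul_im, Complex.exp_ofReal_mul_I_re, Complex.exp_ofReal_mul_I_im]
  ring

lemma bad_subset {α : ℝ} (hα : 0 < α) (hα' : α < Real.pi / 2) (t₀ : ℂ) (s : ℝ) :
    {z : ℂ | z ∈ sector α ∧ ‖z‖ < s ∧ z - t₀ ∉ sector α} ⊆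
      {z : ℂ | |((Circle.exp (-α) : ℂ) * z).im| ≤ 2 * ‖t₀‖ ∧ ‖z‖ < s} ∪
      {z : ℂ | |((Circle.exp α : ℂ) * z).im| ≤ 2 * ‖t₀‖ ∧ ‖z‖ < s} := by
  rintro z ⟨hzs, hzb, hzn⟩
  have hpi := Real.pi_pos
  have hsin : 0 < Real.sin α := Real.sin_pos_of_pos_of_lt_pi hα (by linarith)
  have hcos : 0 < Real.cos α := Real.cos_pos_of_mem_Ioo ⟨by linarith, hα'⟩
  have hsec := (mem_sector_iff hα hα' z).1 hzs
  have hf1 : 0 ≤ z.re * Real.sin α - z.im * Real.cos α := by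
    rcases abs_cases z.im with ⟨h1, h2⟩ | ⟨h1, h2⟩ <;> rw [h1] at hsec
    · linarith
    · linarith [mul_nonneg (neg_nonneg.2 h2.le) hcos.le]
  have hf2 : 0 ≤ z.re * Real.sin α + z.im * Real.cos α := by
    rcases abs_cases z.im with ⟨h1, h2⟩ | ⟨h1, h2⟩ <;> rw [h1] at hsec
    · linarith [mul_nonneg h2 hcos.le]
    · linarith
  have hcon : z.re * Real.sin α - z.im * Real.cos α < 2 * ‖t₀‖ ∨
      z.re * Real.sin α + z.im * Real.cos α < 2 * ‖t₀‖ := by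
    by_contra hc
    push_neg at hc
    exact hzn (sub_mem_sector hα hα' hzs hc.1 hc.2)
  rcases hcon with h | h
  · left
    refine ⟨?_, hzb⟩
    rw [exp_neg_mul_im, abs_le]
    constructor <;> nlinarith [norm_nonneg t₀]
  · right
    refine ⟨?_, hzb⟩
    rw [exp_pos_mul_im, abs_le]
    constructor <;> nlinarith [norm_nonneg t₀]

lemma key_measure {α : ℝ} (hα : 0 < α) (hα' : α < Real.pi / 2) {t₀ : ℂ}
    {B : Set ℂ} (hB : B ⊆ sector α) {s : ℝ} (hs : 0 ≤ s) :
    volume (B ∩ sectorBall α s) ≤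
      volume (((fun z => z + t₀) ⁻¹' B ∩ sector α) ∩ sectorBall α (s + ‖t₀‖)) +
        ENNReal.ofReal (16 * s * ‖t₀‖) := by
  set c := ‖t₀‖ with hc
  have hc0 : 0 ≤ c := norm_nonneg t₀
  set G : Set ℂ := {z | z - t₀ ∈ sector α} with hG
  refine (measure_le_inter_add_diff volume (B ∩ sectorBall α s) G).trans (add_le_add ?_ ?_)
  · -- translate part
    have hsub : (B ∩ sectorBall α s) ∩ G ⊆
        (fun z => z + (-t₀)) ⁻¹' (((fun z => z + t₀) ⁻¹' B ∩ sector α) ∩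
          sectorBall α (s + c)) := by
      rintro z ⟨⟨hzB, hzs, hzb⟩, hzG⟩
      have hzt : z - t₀ ∈ sector α := hzG
      refine ⟨⟨?_, ?_⟩, ?_, ?_⟩
      · show (z + -t₀) + t₀ ∈ B
        simpa using hzB
      · show z + -t₀ ∈ sector α
        simpa [sub_eq_add_neg] using hzt
      · show z + -t₀ ∈ sector α
        simpa [sub_eq_add_neg] using hzt
      · show ‖z + -t₀‖ < s + c
        have h1 := norm_add_le z (-t₀)
        rw [norm_neg] at h1
        calc ‖z + -t₀‖ ≤ ‖z‖ + c := h1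
          _ < s + c := by linarith
    refine (measure_mono hsub).trans ?_
    rw [measure_preimage_add_right]
  · -- strip part
    have hsub2 : (B ∩ sectorBall α s) \ G ⊆
        {z : ℂ | |((Circle.exp (-α) : ℂ) * z).im| ≤ 2 * c ∧ ‖z‖ < s} ∪
        {z : ℂ | |((Circle.exp α : ℂ) * z).im| ≤ 2 * c ∧ ‖z‖ < s} := by
      rintro z ⟨⟨hzB, _, hzb⟩, hzG⟩
      exact bad_subset hα hα' t₀ s ⟨hB hzB, hzb, hzG⟩
    refine (measure_mono hsub2).trans ?_
    refine (measure_union_le _ _).trans ?_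
    refine le_trans (add_le_add (strip_vol _ _ _) (strip_vol _ _ _)) ?_
    rw [← ENNReal.ofReal_mul (by linarith), ← ENNReal.ofReal_add (by nlinarith) (by nlinarith)]
    apply ENNReal.ofReal_le_ofReal
    nlinarith

lemma key_measure_real {α : ℝ} (hα : 0 < α) (hα' : α < Real.pi / 2) {t₀ : ℂ}
    {B : Set ℂ} (hB : B ⊆ sector α) {s : ℝ} (hs : 0 ≤ s) :
    (volume (B ∩ sectorBall α s)).toReal ≤
      (volume (((fun z => z + t₀) ⁻¹' B ∩ sector α) ∩
        sectorBall α (s + ‖t₀‖))).toReal + 16 * s * ‖t₀‖ := by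
  have hc0 : (0:ℝ) ≤ ‖t₀‖ := norm_nonneg t₀
  have hfin : volume (((fun z => z + t₀) ⁻¹' B ∩ sector α) ∩
      sectorBall α (s + ‖t₀‖)) ≠ ⊤ :=
    ((measure_mono Set.inter_subset_right).trans_lt
      (lt_of_le_of_ne le_top (vol_sectorBall_ne_top _ _))).ne
  have h := key_measure hα hα' (t₀ := t₀) hB hs
  have h2 := ENNReal.toReal_mono (by
      rw [Ne, ENNReal.add_eq_top]
      push_neg
      exact ⟨hfin, ENNReal.ofReal_ne_top⟩) h
  rw [ENNReal.toReal_add hfin ENNReal.ofReal_ne_top, ENNReal.toReal_ofReal (by nlinarith)] at h2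
  exact h2

end Aux4
section Aux5
open Complex Pointwise

lemma D_formula {α : ℝ} {r : ℝ} (hr : 0 < r) :
    (volume (sectorBall α r)).toReal =
      r ^ 2 * (volume (sectorBall α 1)).toReal := by
  rw [vol_sectorBall α hr, ENNReal.toReal_mul, ENNReal.toReal_ofReal (by positivity)]

lemma frac_nonneg (α : ℝ) (C : Set ℂ) (r : ℝ) :
    0 ≤ (volume (C ∩ sectorBall α r)).toReal / (volume (sectorBall α r)).toReal :=
  div_nonneg ENNReal.toReal_nonneg ENNReal.toReal_nonneg

lemma frac_le_one (α : ℝ) (C : Set ℂ) (r : ℝ) :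
    (volume (C ∩ sectorBall α r)).toReal / (volume (sectorBall α r)).toReal ≤ 1 := by
  rcases eq_or_lt_of_le (ENNReal.toReal_nonneg (a := volume (sectorBall α r))) with h | h
  · rw [← h, div_zero]
    exact zero_le_one
  · rw [div_le_one h]
    exact ENNReal.toReal_mono (vol_sectorBall_ne_top α r)
      (measure_mono Set.inter_subset_right)

lemma udens_le_one (α : ℝ) (C : Set ℂ) : udens α C ≤ 1 := by
  have hb : Filter.IsBoundedUnder (· ≥ ·) (Filter.atTop : Filter ℝ)
      (fun r => (volume (C ∩ sectorBall α r)).toReal / (volume (sectorBall α r)).toReal) :=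
    Filter.isBoundedUnder_of ⟨0, fun r => frac_nonneg α C r⟩
  exact Filter.limsup_le_of_le hb.isCoboundedUnder_le
    (Filter.Eventually.of_forall (frac_le_one α C))

set_option maxHeartbeats 1000000 in
lemma udens_translate {α : ℝ} (hα : 0 < α) (hα' : α < Real.pi / 2) (t₀ : ℂ)
    {B : Set ℂ} (hB : B ⊆ sector α) (hd : udens α B = 1) :
    udens α ((fun z => z + t₀) ⁻¹' B ∩ sector α) = 1 := by
  classical
  set B' : Set ℂ := (fun z => z + t₀) ⁻¹' B ∩ sector α with hB'
  set c : ℝ := ‖t₀‖ with hcdef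
  have hc0 : 0 ≤ c := norm_nonneg t₀
  set d : ℝ := (volume (sectorBall α 1)).toReal with hddef
  have hd0 : 0 < d :=
    ENNReal.toReal_pos (vol_sectorBall_one_pos hα).ne' (vol_sectorBall_ne_top α 1)
  set f : ℝ → ℝ := fun r =>
    (volume (B ∩ sectorBall α r)).toReal / (volume (sectorBall α r)).toReal with hf
  set g : ℝ → ℝ := fun r =>
    (volume (B' ∩ sectorBall α r)).toReal / (volume (sectorBall α r)).toReal with hg
  have hfls : Filter.limsup f Filter.atTop = 1 := hd
  have hgoal : udens α B' = Filter.limsup g Filter.atTop := rfl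
  rw [hgoal]
  -- the quantitative step
  have hstep : ∀ ε : ℝ, 0 < ε → ∀ s : ℝ, 1 ≤ s →
      2 * (2 * c * d + c ^ 2 * d + 16 * c) ≤ s * (ε * d) →
      f s - ε / 2 ≤ g (s + c) := by
    intro ε hε s hs1 hM
    have hs0 : 0 < s := lt_of_lt_of_le one_pos hs1
    have hsc0 : 0 < s + c := by linarith
    have hDs : (volume (sectorBall α s)).toReal = s ^ 2 * d := D_formula hs0
    have hDr : (volume (sectorBall α (s + c))).toReal = (s + c) ^ 2 * d := D_formula hsc0
    have hkey := key_measure_real hα hα' (t₀ := t₀) hB hs0.le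
    set u : ℝ := f s with hu
    have hu0 : 0 ≤ u := frac_nonneg α B s
    have hu1 : u ≤ 1 := frac_le_one α B s
    have hNs : (volume (B ∩ sectorBall α s)).toReal = u * (s ^ 2 * d) := by
      rw [hu, hf]
      simp only []
      rw [hDs, div_mul_cancel₀]
      positivity
    have hN' : u * (s ^ 2 * d) - 16 * s * c ≤
        (volume (B' ∩ sectorBall α (s + c))).toReal := by
      rw [← hNs]
      linarith [hkey]
    show u - ε / 2 ≤ g (s + c)
    have hgr : g (s + c) =
        (volume (B' ∩ sectorBall α (s + c))).toReal / ((s + c) ^ 2 * d) := by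
      rw [hg]
      simp only []
      rw [hDr]
    rw [hgr, le_div_iff₀ (by positivity)]
    have hstep2 : u * d * (2 * s * c + c ^ 2) ≤ d * (2 * s * c + c ^ 2) := by
      nlinarith [mul_nonneg hd0.le (show (0:ℝ) ≤ 2 * s * c + c ^ 2 by positivity)]
    have hstep3 : d * (2 * s * c + c ^ 2) + 16 * s * c ≤
        s * (2 * c * d + c ^ 2 * d + 16 * c) := by
      nlinarith [mul_nonneg (mul_nonneg (sub_nonneg.2 hs1) (sq_nonneg c)) hd0.le]
    have hstep4 : s * (2 * c * d + c ^ 2 * d + 16 * c) ≤ ε / 2 * (s ^ 2 * d) := by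
      nlinarith [mul_le_mul_of_nonneg_left hM hs0.le]
    refine le_trans ?_ hN'
    have hring : u * ((s + c) ^ 2 * d) = u * (s ^ 2 * d) + u * d * (2 * s * c + c ^ 2) := by
      ring
    have hring2 : ε / 2 * ((s + c) ^ 2 * d) =
        ε / 2 * (s ^ 2 * d) + ε / 2 * ((2 * s * c + c ^ 2) * d) := by ring
    have hpos : 0 ≤ ε / 2 * ((2 * s * c + c ^ 2) * d) := by positivity
    nlinarith [hstep2, hstep3, hstep4, hring, hring2, hpos]
  -- frequently bound
  have hfreq : ∀ ε : ℝ, 0 < ε → ∃ᶠ r in Filter.atTop, 1 - ε ≤ g r := by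
    intro ε hε
    have hbb : Filter.IsBoundedUnder (· ≥ ·) (Filter.atTop : Filter ℝ) f :=
      Filter.isBoundedUnder_of ⟨0, fun r => frac_nonneg α B r⟩
    have hcob : Filter.IsCoboundedUnder (· ≤ ·) Filter.atTop f := hbb.isCoboundedUnder_le
    have hflt : (1 : ℝ) - ε / 2 < Filter.limsup f Filter.atTop := by
      rw [hfls]; linarith
    have hfr := Filter.frequently_lt_of_lt_limsup hcob hflt
    rw [Filter.frequently_atTop] at hfr ⊢
    intro b
    obtain ⟨s, hsb, hsf⟩ := hfr (max (max 1 (2 * (2 * c * d + c ^ 2 * d + 16 * c) / (ε * d))) b)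
    refine ⟨s + c, ?_, ?_⟩
    · calc b ≤ max (max 1 (2 * (2 * c * d + c ^ 2 * d + 16 * c) / (ε * d))) b :=
          le_max_right _ _
        _ ≤ s := hsb
        _ ≤ s + c := by linarith
    · have hs1 : 1 ≤ s := le_trans (le_trans (le_max_left _ _) (le_max_left _ _)) hsb
      have hsM : 2 * (2 * c * d + c ^ 2 * d + 16 * c) ≤ s * (ε * d) := by
        have h1 : 2 * (2 * c * d + c ^ 2 * d + 16 * c) / (ε * d) ≤ s :=
          le_trans (le_trans (le_max_right _ _) (le_max_left _ _)) hsb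
        rw [div_le_iff₀ (by positivity)] at h1
        linarith
      have := hstep ε hε s hs1 hsM
      linarith
  -- conclude
  have hub : Filter.limsup g Filter.atTop ≤ 1 := udens_le_one α B'
  have hlb : ∀ ε : ℝ, 0 < ε → 1 - ε ≤ Filter.limsup g Filter.atTop := by
    intro ε hε
    have hbb2 : Filter.IsBoundedUnder (· ≤ ·) (Filter.atTop : Filter ℝ) g :=
      Filter.isBoundedUnder_of ⟨1, fun r => frac_le_one α B' r⟩
    exact Filter.le_limsup_of_frequently_le (hfreq ε hε) hbb2
  by_contra hne
  have hlt : Filter.limsup g Filter.atTop < 1 := lt_of_le_of_ne hub hne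
  have := hlb ((1 - Filter.limsup g Filter.atTop) / 2) (by linarith)
  linarith

end Aux5
/-- The set of distributionally semi-irregular vectors is invariant under the semigroup. -/
theorem stmt_5 (α : ℝ) (hα : 0 < α) (hα' : α < Real.pi / 2)
    {𝕜 X : Type*} [NontriviallyNormedField 𝕜] [NormedAddCommGroup X] [NormedSpace 𝕜 X]
    [CompleteSpace X] (S : CZeroSemigroup α 𝕜 X)
    (x₀ : X) (hx₀ : DistSemiIrregular S x₀) :
    ∀ t₀ ∈ sector α, DistSemiIrregular S (S.T t₀ x₀) := by
  intro t₀ ht₀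
  obtain ⟨A, B, hA, hB, hAm, hBm, hAd, hBd, hAten, δ, hδ, hBlow⟩ := hx₀
  refine ⟨A, (fun z => z + t₀) ⁻¹' B ∩ sector α, hA, Set.inter_subset_right, hAm,
    (measurable_add_const t₀ hBm).inter (measurableSet_sector α), hAd,
    udens_translate hα hα' t₀ hB hBd, ?_, δ, hδ, ?_⟩
  · -- tendsto to zero along A
    have hAt : ∀ᶠ t in alongAbs A, t ∈ A := Filter.mem_inf_of_right (Filter.mem_principal_self A)
    have hcomm : ∀ t ∈ A, S.T t (S.T t₀ x₀) = S.T t₀ (S.T t x₀) := by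
      intro t htA
      have h1 := S.map_add' t (hA htA) t₀ ht₀
      have h2 := S.map_add' t₀ ht₀ t (hA htA)
      calc S.T t (S.T t₀ x₀) = ((S.T t).comp (S.T t₀)) x₀ := rfl
        _ = S.T (t + t₀) x₀ := by rw [← h1]
        _ = S.T (t₀ + t) x₀ := by rw [add_comm]
        _ = ((S.T t₀).comp (S.T t)) x₀ := by rw [h2]
        _ = S.T t₀ (S.T t x₀) := rfl
    have hbound : ∀ᶠ t in alongAbs A, ‖S.T t (S.T t₀ x₀)‖ ≤ ‖S.T t₀‖ * ‖S.T t x₀‖ := by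
      filter_upwards [hAt] with t htA
      rw [hcomm t htA]
      exact (S.T t₀).le_opNorm _
    have hg : Filter.Tendsto (fun t => ‖S.T t₀‖ * ‖S.T t x₀‖) (alongAbs A) (nhds 0) := by
      simpa using hAten.const_mul ‖S.T t₀‖
    exact squeeze_zero' (Filter.Eventually.of_forall fun t => norm_nonneg _) hbound hg
  · -- lower bound on the translated set
    rintro t ⟨htB, hts⟩
    have h1 := S.map_add' t hts t₀ ht₀
    have heq : S.T (t + t₀) x₀ = S.T t (S.T t₀ x₀) := by rw [h1]; rfl
    calc δ ≤ ‖S.T (t + t₀) x₀‖ := hBlow _ htB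
      _ = ‖S.T t (S.T t₀ x₀)‖ := by rw [heq]
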